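/- Let α ∈ (0,1), R > 0 and T > 0. There exists a constant C = C(α,R,T) > 0 such that for all 0 < s < t₁ ≤ T and all x ∈ ℝ with |x| ≤ R/8, the double Gaussian integral satisfies ∫_ℝ (2πs)^{-1/2} e^{-y^2/(2s)} [ ∫_{-R/3}^{R/3} (2π(t₁−s))^{-1/2} e^{-(z−y)^2/(2(t₁−s))} g'(x + z − y) dz ] dy ≥ C (t₁ − s)^{(α−1)/2} e^{-x^2/(t₁−s)}, where g'(u) = α u^{α−1} for u ∈ (0,1) and g'(u) = 0 otherwise. -/

import Mathlib

open MeasureTheory Real intervalIntegral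

lemma aux_min (s T d : ℝ) (hs : 0 < s) (hsT : s ≤ T) (hd : 0 < d) :
    min ((2*π)^(-(1:ℝ)/2)) (d * (2*π*T)^(-(1:ℝ)/2))
      ≤ (2*π*s)^(-(1:ℝ)/2) * min (Real.sqrt s) d := by
  have hπ := Real.pi_pos
  rcases le_total (Real.sqrt s) d with h | h
  · rw [min_eq_left h]
    have key : (2*π*s)^(-(1:ℝ)/2) * Real.sqrt s = (2*π)^(-(1:ℝ)/2) := by
      rw [Real.sqrt_eq_rpow, Real.mul_rpow (by positivity) hs.le, mul_assoc,
        ← Real.rpow_add hs]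
      norm_num
    rw [key]
    exact min_le_left _ _
  · rw [min_eq_right h]
    have hTs : (2*π*T)^(-(1:ℝ)/2) ≤ (2*π*s)^(-(1:ℝ)/2) :=
      Real.rpow_le_rpow_of_nonpos (by positivity) (by nlinarith) (by norm_num)
    calc min ((2*π)^(-(1:ℝ)/2)) (d * (2*π*T)^(-(1:ℝ)/2))
        ≤ d * (2*π*T)^(-(1:ℝ)/2) := min_le_right _ _
      _ ≤ d * (2*π*s)^(-(1:ℝ)/2) := by gcongr
      _ = (2*π*s)^(-(1:ℝ)/2) * d := mul_comm _ _

lemma sq_sub_le_aux (u x : ℝ) : (u - x)^2 ≤ 2*u^2 + 2*x^2 := by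
  nlinarith [sq_nonneg (u + x)]

lemma sq_le_of_le_sqrt_aux {m τ : ℝ} (hm : 0 ≤ m) (hτ : 0 ≤ τ) (h : m ≤ Real.sqrt τ) :
    m^2 ≤ τ := by
  have h1 := mul_self_le_mul_self hm h
  have h2 := Real.sq_sqrt hτ
  simpa [sq, h2] using (by simpa [sq] using h1 : m^2 ≤ Real.sqrt τ ^ 2).trans_eq h2

set_option maxHeartbeats 1000000 in
theorem stmt_12 (α R T : ℝ) (hα : α ∈ Set.Ioo (0 : ℝ) 1) (hR : 0 < R) (hT : 0 < T)
    (g' : ℝ → ℝ)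
    (hg1 : ∀ u : ℝ, 0 < u → u < 1 → g' u = α * u ^ (α - 1))
    (hg2 : ∀ u : ℝ, u ≤ 0 ∨ 1 ≤ u → g' u = 0) :
    ∃ C : ℝ, 0 < C ∧
      ∀ s t₁ x : ℝ, 0 < s → s < t₁ → t₁ ≤ T → |x| ≤ R / 8 →
        C * (t₁ - s) ^ ((α - 1) / 2) * Real.exp (-x ^ 2 / (t₁ - s))
          ≤ ∫ y : ℝ, (2 * π * s) ^ (-(1 : ℝ) / 2) * Real.exp (-y ^ 2 / (2 * s)) *
              ∫ z in (-(R / 3))..(R / 3),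
                (2 * π * (t₁ - s)) ^ (-(1 : ℝ) / 2) *
                  Real.exp (-(z - y) ^ 2 / (2 * (t₁ - s))) * g' (x + z - y) := by
  obtain ⟨hα0, hα1⟩ := hα
  have hπ := Real.pi_pos
  -- explicit description of g'
  have hg'_eq : g' = Set.indicator (Set.Ioo (0:ℝ) 1) (fun u => α * u ^ (α - 1)) := by
    funext u
    rcases le_or_gt u 0 with h | h
    · rw [hg2 u (Or.inl h), eq_comm]
      apply Set.indicator_of_notMem
      simp only [Set.mem_Ioo, not_and, not_lt]
      intro hu; linarith
    rcases lt_or_ge u 1 with h1 | h1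
    · rw [hg1 u h h1, eq_comm]
      exact Set.indicator_of_mem (Set.mem_Ioo.mpr ⟨h, h1⟩) _
    · rw [hg2 u (Or.inr h1), eq_comm]
      apply Set.indicator_of_notMem
      simp only [Set.mem_Ioo, not_and, not_lt]
      intro hu; exact h1
  have hg'_nonneg : ∀ u, 0 ≤ g' u := by
    intro u; rw [hg'_eq]
    apply Set.indicator_nonneg
    intro v hv
    exact mul_nonneg hα0.le (Real.rpow_nonneg hv.1.le _)
  have hg'_meas : Measurable g' := by
    rw [hg'_eq]
    exact (by fun_prop : Measurable fun u : ℝ => α * u ^ (α-1)).indicator measurableSet_Ioo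
  have hg'_int : Integrable g' := by
    rw [hg'_eq, integrable_indicator_iff measurableSet_Ioo]
    have h1 : IntervalIntegrable (fun u:ℝ => u ^ (α-1)) volume 0 1 :=
      intervalIntegral.intervalIntegrable_rpow' (by linarith)
    have h2 : IntegrableOn (fun u:ℝ => u ^ (α-1)) (Set.Ioc 0 1) :=
      (intervalIntegrable_iff_integrableOn_Ioc_of_le (by norm_num)).mp h1
    exact (h2.mono_set Set.Ioo_subset_Ioc_self).const_mul α
  set Mg : ℝ := ∫ u, g' u with hMg
  have hMg0 : 0 ≤ Mg := integral_nonneg hg'_nonneg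
  -- constants
  set c₁ : ℝ := min ((2*π)^(-(1:ℝ)/2)) ((min (R/24) (1/2)) * (2*π*T)^(-(1:ℝ)/2)) with hc₁def
  set c₂ : ℝ := min ((2*π)^(-(1:ℝ)/2)) ((R/24) * (2*π*T)^(-(1:ℝ)/2)) with hc₂def
  have hc₁pos : 0 < c₁ := lt_min (by positivity) (by positivity)
  have hc₂pos : 0 < c₂ := lt_min (by positivity) (by positivity)
  refine ⟨2 * c₂ * Real.exp (-(1:ℝ)/2) * ((1/4) * c₁ * Real.exp (-1) * α), by positivity, ?_⟩
  intro s t₁ x hs hst ht1 hx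
  set τ : ℝ := t₁ - s with hτdef
  have hτ : 0 < τ := sub_pos.mpr hst
  have hτT : τ ≤ T := by
    have : s ≤ T := le_of_lt (lt_of_lt_of_le hst ht1)
    simp only [hτdef]; linarith
  have hsT : s ≤ T := le_of_lt (lt_of_lt_of_le hst ht1)
  set cτ : ℝ := (2*π*τ)^(-(1:ℝ)/2) with hcτdef
  set cs : ℝ := (2*π*s)^(-(1:ℝ)/2) with hcsdef
  have hcτpos : 0 < cτ := by positivity
  have hcspos : 0 < cs := by positivity
  set m : ℝ := min (Real.sqrt τ) (min (R/24) (1/2)) with hmdef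
  have hmpos : 0 < m := lt_min (Real.sqrt_pos.mpr hτ) (lt_min (by positivity) (by norm_num))
  have hm_sqrt : m ≤ Real.sqrt τ := min_le_left _ _
  have hm_R : m ≤ R/24 := le_trans (min_le_right _ _) (min_le_left _ _)
  have hm_half : m ≤ 1/2 := le_trans (min_le_right _ _) (min_le_right _ _)
  have hm_sq : m^2 ≤ τ := sq_le_of_le_sqrt_aux hmpos.le hτ.le hm_sqrt
  have hRR : -(R/3) ≤ R/3 := by linarith
  -- the inner integrand
  set h : ℝ → ℝ → ℝ := fun y z => cτ * Real.exp (-(z-y)^2/(2*τ)) * g' (x+z-y) with hhdef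
  have h_nonneg : ∀ y z, 0 ≤ h y z := fun y z =>
    mul_nonneg (by positivity) (hg'_nonneg _)
  have h_int : ∀ y : ℝ, Integrable (h y) := by
    intro y
    have h0 : Integrable (fun z : ℝ => g' (z + (x - y))) := hg'_int.comp_add_right (x - y)
    have h0' : Integrable (fun z : ℝ => g' (x + z - y)) := by
      have : (fun z : ℝ => g' (x + z - y)) = fun z => g' (z + (x - y)) := by
        funext z; congr 1; ring
      rw [this]; exact h0
    apply h0'.bdd_mul (c := cτ)
    · apply Continuous.aestronglyMeasurable
      fun_prop
    · refine Filter.Eventually.of_forall (fun z => ?_)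
      rw [Real.norm_eq_abs, abs_of_nonneg (by positivity)]
      have : Real.exp (-(z-y)^2/(2*τ)) ≤ 1 := by
        rw [Real.exp_le_one_iff]
        apply div_nonpos_of_nonpos_of_nonneg
        · simp [sq_nonneg]
        · positivity
      exact mul_le_of_le_one_right hcτpos.le this
  -- inner integral: nonneg
  have inner_nonneg : ∀ y, 0 ≤ ∫ z in (-(R/3))..(R/3), h y z := fun y =>
    intervalIntegral.integral_nonneg hRR (fun z _ => h_nonneg y z)
  -- inner integral: upper bound
  have inner_ub : ∀ y, (∫ z in (-(R/3))..(R/3), h y z) ≤ cτ * Mg := by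
    intro y
    have hint2 : Integrable (fun z : ℝ => cτ * g' (x + z - y)) := by
      have h0 : Integrable (fun z : ℝ => g' (x + z - y)) := by
        have : (fun z : ℝ => g' (x + z - y)) = fun z => g' (z + (x - y)) := by
          funext z; congr 1; ring
        rw [this]; exact hg'_int.comp_add_right (x - y)
      exact h0.const_mul cτ
    have step1 : (∫ z in (-(R/3))..(R/3), h y z)
        ≤ ∫ z in (-(R/3))..(R/3), cτ * g' (x + z - y) := by
      apply intervalIntegral.integral_mono_on hRR (h_int y).intervalIntegrable
        hint2.intervalIntegrable
      intro z _
      have hexp : Real.exp (-(z-y)^2/(2*τ)) ≤ 1 := by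
        rw [Real.exp_le_one_iff]
        apply div_nonpos_of_nonpos_of_nonneg
        · simp [sq_nonneg]
        · positivity
      have := mul_le_mul_of_nonneg_right
        (mul_le_mul_of_nonneg_left hexp hcτpos.le) (hg'_nonneg (x + z - y))
      simpa [hhdef] using this
    have step2 : (∫ z in (-(R/3))..(R/3), cτ * g' (x + z - y))
        ≤ ∫ z : ℝ, cτ * g' (x + z - y) := by
      rw [intervalIntegral.integral_of_le hRR]
      exact setIntegral_le_integral hint2
        (Filter.Eventually.of_forall fun z => mul_nonneg hcτpos.le (hg'_nonneg _))
    have step3 : (∫ z : ℝ, cτ * g' (x + z - y)) = cτ * Mg := by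
      rw [MeasureTheory.integral_const_mul]
      congr 1
      have : (fun z : ℝ => g' (x + z - y)) = fun z => g' (z + (x - y)) := by
        funext z; congr 1; ring
      rw [this]
      exact integral_add_right_eq_self g' (x - y)
    linarith
  -- inner integral: measurability in y
  have hmeas : AEStronglyMeasurable (fun y => ∫ z in (-(R/3))..(R/3), h y z) volume := by
    have heq : (fun y => ∫ z in (-(R/3))..(R/3), h y z)
        = fun y => ∫ z, Set.indicator (Set.Ioc (-(R/3)) (R/3)) (h y) z := by
      funext y
      rw [intervalIntegral.integral_of_le hRR, MeasureTheory.integral_indicator measurableSet_Ioc]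
    rw [heq]
    apply MeasureTheory.AEStronglyMeasurable.integral_prod_right'
      (f := fun p : ℝ × ℝ => Set.indicator (Set.Ioc (-(R/3)) (R/3)) (h p.1) p.2)
    have hmeasF : Measurable (fun p : ℝ × ℝ =>
        Set.indicator (Set.Ioc (-(R/3)) (R/3)) (fun _ => (1:ℝ)) p.2 * h p.1 p.2) := by
      apply Measurable.mul
      · exact (measurable_const.indicator measurableSet_Ioc).comp measurable_snd
      · apply Measurable.mul
        · fun_prop
        · exact hg'_meas.comp (by fun_prop)
    have : (fun p : ℝ × ℝ => Set.indicator (Set.Ioc (-(R/3)) (R/3)) (h p.1) p.2)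
        = fun p : ℝ × ℝ =>
          Set.indicator (Set.Ioc (-(R/3)) (R/3)) (fun _ => (1:ℝ)) p.2 * h p.1 p.2 := by
      funext p
      by_cases hp : p.2 ∈ Set.Ioc (-(R/3)) (R/3)
      · rw [Set.indicator_of_mem hp, Set.indicator_of_mem hp, one_mul]
      · rw [Set.indicator_of_notMem hp, Set.indicator_of_notMem hp, zero_mul]
    rw [this]
    exact hmeasF.aestronglyMeasurable
  -- inner integral: lower bound for |y| ≤ R/24
  have inner_lb : ∀ y : ℝ, |y| ≤ R/24 →
      (1/4) * c₁ * Real.exp (-1) * α * (τ ^ ((α-1)/2) * Real.exp (-x^2/τ))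
        ≤ ∫ z in (-(R/3))..(R/3), h y z := by
    intro y hy
    obtain ⟨hx1, hx2⟩ := abs_le.mp hx
    obtain ⟨hy1, hy2⟩ := abs_le.mp hy
    set a : ℝ := y - x with hadef
    set K : ℝ := cτ * (Real.exp (-1) * Real.exp (-x^2/τ)) * (α * τ ^ ((α-1)/2)) with hKdef
    have hKpos : 0 < K := by positivity
    have hsub : -(R/3) ≤ a + m/2 ∧ a + m/2 ≤ a + 3*m/4 ∧ a + 3*m/4 ≤ R/3 := by
      refine ⟨by simp only [hadef]; linarith, by linarith, ?_⟩
      simp only [hadef]; linarith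
    have step1 : (∫ z in (a + m/2)..(a + 3*m/4), h y z)
        ≤ ∫ z in (-(R/3))..(R/3), h y z :=
      intervalIntegral.integral_mono_interval hsub.1 hsub.2.1 hsub.2.2
        (Filter.Eventually.of_forall fun z => h_nonneg y z)
        (h_int y).intervalIntegrable
    have step2 : (∫ z in (a + m/2)..(a + 3*m/4), (K : ℝ))
        ≤ ∫ z in (a + m/2)..(a + 3*m/4), h y z := by
      apply intervalIntegral.integral_mono_on (by linarith)
        intervalIntegrable_const (h_int y).intervalIntegrable
      intro z hz
      obtain ⟨hz1, hz2⟩ := hz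
      set u : ℝ := x + z - y with hudef
      have hz1' : y - x + m/2 ≤ z := by rw [hadef] at hz1; linarith
      have hz2' : z ≤ y - x + 3*m/4 := by rw [hadef] at hz2; linarith
      have hu_lo : m/2 ≤ u := by rw [hudef]; linarith
      have hu_hi : u ≤ 3*m/4 := by rw [hudef]; linarith
      have hu0 : 0 < u := by linarith
      have hu1 : u < 1 := by linarith
      have hum : u ≤ m := by linarith
      have hg'val : g' u = α * u ^ (α - 1) := hg1 u hu0 hu1
      -- rpow bound
      have hr1 : (Real.sqrt τ) ^ (α-1) ≤ u ^ (α-1) :=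
        Real.rpow_le_rpow_of_nonpos hu0 (le_trans hum hm_sqrt) (by linarith)
      have hr2 : (Real.sqrt τ) ^ (α-1) = τ ^ ((α-1)/2) := by
        rw [Real.sqrt_eq_rpow, ← Real.rpow_mul hτ.le]
        congr 1; ring
      have hrpow : τ ^ ((α-1)/2) ≤ u ^ (α-1) := hr2 ▸ hr1
      -- exp bound
      have hzy : z - y = u - x := by simp only [hudef]; ring
      have hu2 : u^2 ≤ τ := by
        have h1 : u^2 ≤ m^2 := by
          have := mul_self_le_mul_self hu0.le hum
          simpa [sq] using this
        linarith
      have hsq : (z-y)^2 ≤ 2*τ + 2*x^2 := by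
        rw [hzy]
        have := sq_sub_le_aux u x
        linarith
      have hexp : Real.exp (-1) * Real.exp (-x^2/τ) ≤ Real.exp (-(z-y)^2/(2*τ)) := by
        rw [← Real.exp_add]
        apply Real.exp_le_exp.mpr
        have h2τ : (0:ℝ) < 2*τ := by positivity
        have e1 : -(2*τ+2*x^2)/(2*τ) ≤ -(z-y)^2/(2*τ) :=
          (div_le_div_iff_of_pos_right h2τ).mpr (by linarith)
        have e2 : -(2*τ+2*x^2)/(2*τ) = -1 + -x^2/τ := by
          field_simp
          ring
        linarith
      have hzc : h y z = cτ * Real.exp (-(z-y)^2/(2*τ)) * (α * u ^ (α-1)) := by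
        simp only [hhdef, ← hudef, hg'val]
      rw [hzc, hKdef]
      gcongr
    have step3 : (∫ z in (a + m/2)..(a + 3*m/4), (K : ℝ)) = m/4 * K := by
      rw [intervalIntegral.integral_const, smul_eq_mul]
      congr 1; ring
    have hkey : c₁ ≤ cτ * m := by
      rw [hc₁def, hcτdef, hmdef]
      exact aux_min τ T (min (R/24) (1/2)) hτ hτT (lt_min (by positivity) (by norm_num))
    have step4 : (1/4) * c₁ * Real.exp (-1) * α * (τ ^ ((α-1)/2) * Real.exp (-x^2/τ))
        ≤ m/4 * K := by
      have hfac : (0:ℝ) ≤ Real.exp (-1) * Real.exp (-x^2/τ) * (α * τ ^ ((α-1)/2)) := by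
        positivity
      calc (1/4) * c₁ * Real.exp (-1) * α * (τ ^ ((α-1)/2) * Real.exp (-x^2/τ))
          = (1/4) * (Real.exp (-1) * Real.exp (-x^2/τ) * (α * τ ^ ((α-1)/2))) * c₁ := by
            ring
        _ ≤ (1/4) * (Real.exp (-1) * Real.exp (-x^2/τ) * (α * τ ^ ((α-1)/2))) * (cτ * m) := by
            apply mul_le_mul_of_nonneg_left hkey
            positivity
        _ = m/4 * K := by rw [hKdef]; ring
    linarith
  -- the outer integrand
  set F : ℝ → ℝ := fun y => cs * Real.exp (-y^2/(2*s)) * ∫ z in (-(R/3))..(R/3), h y z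
    with hFdef
  have hF_nonneg : ∀ y, 0 ≤ F y := fun y =>
    mul_nonneg (by positivity) (inner_nonneg y)
  have hF_meas : AEStronglyMeasurable F volume := by
    apply AEStronglyMeasurable.mul _ hmeas
    apply Continuous.aestronglyMeasurable
    fun_prop
  have hF_int : Integrable F := by
    have hdom : Integrable (fun y : ℝ => (cs * (cτ * Mg)) * Real.exp (-(1/(2*s)) * y^2)) :=
      (integrable_exp_neg_mul_sq (by positivity : (0:ℝ) < 1/(2*s))).const_mul _
    apply Integrable.mono' hdom hF_meas
    apply Filter.Eventually.of_forall
    intro y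
    rw [Real.norm_eq_abs, abs_of_nonneg (hF_nonneg y)]
    have harg : -y^2/(2*s) = -(1/(2*s)) * y^2 := by ring
    have h1 : F y ≤ cs * Real.exp (-y^2/(2*s)) * (cτ * Mg) :=
      mul_le_mul_of_nonneg_left (inner_ub y) (by positivity)
    have h2 : cs * Real.exp (-y^2/(2*s)) * (cτ * Mg)
        = (cs * (cτ * Mg)) * Real.exp (-(1/(2*s)) * y^2) := by
      rw [← harg]; ring
    linarith [h1, h2.le]
  -- final chain
  set e : ℝ := min (Real.sqrt s) (R/24) with hedef
  have hepos : 0 < e := lt_min (Real.sqrt_pos.mpr hs) (by positivity)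
  have he_R : e ≤ R/24 := min_le_right _ _
  have he_sq : e^2 ≤ s := sq_le_of_le_sqrt_aux hepos.le hs.le (min_le_left _ _)
  set B : ℝ := (1/4) * c₁ * Real.exp (-1) * α * (τ ^ ((α-1)/2) * Real.exp (-x^2/τ))
    with hBdef
  have hBpos : 0 < B := by positivity
  have hkey2 : c₂ ≤ cs * e := by
    rw [hc₂def, hcsdef, hedef]
    exact aux_min s T (R/24) hs hsT (by positivity)
  have hconst : ∀ y ∈ Set.Icc (-e) e, cs * Real.exp (-(1:ℝ)/2) * B ≤ F y := by
    intro y hy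
    obtain ⟨hy1, hy2⟩ := hy
    have hysq : y^2 ≤ s := by
      have := sq_le_sq' hy1 hy2
      linarith
    have hexp : Real.exp (-(1:ℝ)/2) ≤ Real.exp (-y^2/(2*s)) := by
      apply Real.exp_le_exp.mpr
      rw [div_le_div_iff₀ (by norm_num) (by positivity)]
      linarith
    have hyabs : |y| ≤ R/24 := by
      rw [abs_le]; constructor <;> [linarith [he_R]; linarith [he_R]]
    have hinner := inner_lb y hyabs
    calc cs * Real.exp (-(1:ℝ)/2) * B
        ≤ cs * Real.exp (-y^2/(2*s)) * B := by
          apply mul_le_mul_of_nonneg_right _ hBpos.le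
          exact mul_le_mul_of_nonneg_left hexp hcspos.le
      _ ≤ cs * Real.exp (-y^2/(2*s)) * ∫ z in (-(R/3))..(R/3), h y z := by
          apply mul_le_mul_of_nonneg_left _ (by positivity)
          rw [hBdef]; exact hinner
      _ = F y := rfl
  have hset : (cs * Real.exp (-(1:ℝ)/2) * B) * (2*e) ≤ ∫ y in Set.Icc (-e) e, F y := by
    have h := setIntegral_ge_of_const_le_real measurableSet_Icc
      (by rw [Real.volume_Icc]; exact ENNReal.ofReal_ne_top) hconst hF_int.integrableOn
    rw [Real.volume_real_Icc, max_eq_left (by linarith)] at h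
    calc (cs * Real.exp (-(1:ℝ)/2) * B) * (2*e)
        = (cs * Real.exp (-(1:ℝ)/2) * B) * (e - -e) := by ring
      _ ≤ ∫ y in Set.Icc (-e) e, F y := h
  have hfull : (∫ y in Set.Icc (-e) e, F y) ≤ ∫ y, F y :=
    setIntegral_le_integral hF_int (Filter.Eventually.of_forall hF_nonneg)
  have hgoal : 2 * c₂ * Real.exp (-(1:ℝ)/2) * ((1/4) * c₁ * Real.exp (-1) * α)
      * τ ^ ((α-1)/2) * Real.exp (-x^2/τ)
      ≤ ∫ y, F y := by
    have h1 : 2 * c₂ * Real.exp (-(1:ℝ)/2) * ((1/4) * c₁ * Real.exp (-1) * α)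
        * τ ^ ((α-1)/2) * Real.exp (-x^2/τ)
        = (2 * c₂) * (Real.exp (-(1:ℝ)/2) * B) := by
      rw [hBdef]; ring
    have h2 : (2 * c₂) * (Real.exp (-(1:ℝ)/2) * B)
        ≤ (2 * (cs * e)) * (Real.exp (-(1:ℝ)/2) * B) := by
      apply mul_le_mul_of_nonneg_right (by linarith) (by positivity)
    have h3 : (2 * (cs * e)) * (Real.exp (-(1:ℝ)/2) * B)
        = (cs * Real.exp (-(1:ℝ)/2) * B) * (2*e) := by ring
    linarith
  calc 2 * c₂ * Real.exp (-(1:ℝ)/2) * ((1/4) * c₁ * Real.exp (-1) * α)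
      * τ ^ ((α-1)/2) * Real.exp (-x^2/τ) ≤ ∫ y, F y := hgoal
    _ = ∫ y : ℝ, cs * Real.exp (-y ^ 2 / (2 * s)) *
        ∫ z in (-(R / 3))..(R / 3),
          cτ * Real.exp (-(z - y) ^ 2 / (2 * τ)) * g' (x + z - y) := by
      apply MeasureTheory.integral_congr_ae
      apply Filter.Eventually.of_forall
      intro y
      simp only [hFdef, hhdef]
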